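/- arXiv:1002.1887 — 2 statements merged into one kernel-verified Lean document; each statement's English description precedes it below -/
import Mathlib

section
/- For any hierarchical segmentation (H,μ) on a finite connected graph G and any λ ≥ 0, the graph H[λ] induced by the union of the edge-closed unions of regions of hierarchy elements at level ≤ λ is a segmentation of G. -/
open SimpleGraph

variable {V : Type*} [Fintype V] [DecidableEq V]

/-- The subgraph of `G` induced by a set `S` of edges: its edges are the edges of `G`
belonging to `S`, and its vertices are the endpoints of those edges. -/
def edgeInduced (G : SimpleGraph V) (S : Set (Sym2 V)) : G.Subgraph where
  verts := {x | ∃ y, G.Adj x y ∧ s(x, y) ∈ S}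
  Adj x y := G.Adj x y ∧ s(x, y) ∈ S
  adj_sub h := h.1
  edge_vert h := ⟨_, h⟩
  symm := ⟨fun x y h => ⟨h.1.symm, by rw [Sym2.eq_swap]; exact h.2⟩⟩

/-- The edge-closing `φ`: `φ(X)` has the same vertices as `X` and all edges of `G`
with both endpoints in `X`. -/
def phi (G : SimpleGraph V) (X : G.Subgraph) : G.Subgraph where
  verts := X.verts
  Adj x y := G.Adj x y ∧ x ∈ X.verts ∧ y ∈ X.verts
  adj_sub h := h.1
  edge_vert h := h.2.1
  symm := ⟨fun x y h => ⟨h.1.symm, h.2.2, h.2.1⟩⟩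

/-- The connected component of the subgraph `S` containing the vertex `x`. -/
def compOf (G : SimpleGraph V) (S : G.Subgraph) (x : V) : G.Subgraph where
  verts := {y ∈ S.verts | S.spanningCoe.Reachable x y}
  Adj a b := S.Adj a b ∧ S.spanningCoe.Reachable x a
  adj_sub h := S.adj_sub h.1
  edge_vert h := ⟨S.edge_vert h.1, h.2⟩
  symm := ⟨fun a b h => ⟨h.1.symm, h.2.trans (SimpleGraph.Adj.reachable (by exact h.1))⟩⟩

/-- A set `C` of edges of `G` is a cut if every edge of `C` joins two distinct
nonempty connected components of the graph induced by the complementary edges. -/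
def IsCut (G : SimpleGraph V) (C : Set (Sym2 V)) : Prop :=
  ∀ x y, G.Adj x y → s(x, y) ∈ C →
    x ∈ (edgeInduced G (G.edgeSet \ C)).verts ∧
    y ∈ (edgeInduced G (G.edgeSet \ C)).verts ∧
    ¬ (edgeInduced G (G.edgeSet \ C)).spanningCoe.Reachable x y

/-- A subgraph `S` of `G` is a segmentation if the complement of its edge set is a cut. -/
def IsSegmentation (G : SimpleGraph V) (S : G.Subgraph) : Prop :=
  IsCut G (G.edgeSet \ S.edgeSet)

/-- Number of connected components of a subgraph. -/
noncomputable def numComp (G : SimpleGraph V) (S : G.Subgraph) : ℕ :=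
  Nat.card S.coe.ConnectedComponent

/-- Adding the edge `{x, y}` (and its endpoints) to the subgraph `X`. -/
def addEdge (G : SimpleGraph V) (X : G.Subgraph) {x y : V} (h : G.Adj x y) : G.Subgraph where
  verts := X.verts ∪ {x, y}
  Adj a b := X.Adj a b ∨ s(a, b) = s(x, y)
  adj_sub := by
    rintro a b (hab | hab)
    · exact X.adj_sub hab
    · rcases Sym2.eq_iff.mp hab with ⟨rfl, rfl⟩ | ⟨rfl, rfl⟩
      · exact h
      · exact h.symm
  edge_vert := by
    rintro a b (hab | hab)
    · exact Or.inl (X.edge_vert hab)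
    · rcases Sym2.eq_iff.mp hab with ⟨rfl, rfl⟩ | ⟨rfl, rfl⟩
      · exact Or.inr (by simp)
      · exact Or.inr (by simp)
  symm := ⟨by
    rintro a b (hab | hab)
    · exact Or.inl hab.symm
    · right; rwa [Sym2.eq_swap]⟩

/-- The edge `{x, y}` is W-simple for `X` if adding it does not change the number
of connected components. -/
def WSimple (G : SimpleGraph V) (X : G.Subgraph) {x y : V} (h : G.Adj x y) : Prop :=
  numComp G (addEdge G X h) = numComp G X

/-- `X` is a binary watershed of `G` if no edge outside of `X` is W-simple for `X`. -/
def BinaryWatershed (G : SimpleGraph V) (X : G.Subgraph) : Prop :=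
  ∀ x y (h : G.Adj x y), s(x, y) ∉ X.edgeSet → ¬ WSimple G X h

/-- The cross-section `F[l]`: the subgraph induced by the edges of weight at most `l`. -/
def levelSub (G : SimpleGraph V) (F : Sym2 V → NNReal) (l : NNReal) : G.Subgraph :=
  edgeInduced G {e | F e ≤ l}

/-- The connection value between `x` and `y`: the least level `l` such that `x` and `y`
lie in the same connected component of `F[l]`. -/
noncomputable def connVal (G : SimpleGraph V) (F : Sym2 V → NNReal) (x y : V) : NNReal :=
  sInf {l | (levelSub G F l).spanningCoe.Reachable x y}

/-- The edge `{x, y}` is W-destructible for `F` with lowest value `l0`. -/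
def WDestructible (G : SimpleGraph V) (F : Sym2 V → NNReal) {x y : V} (h : G.Adj x y)
    (l0 : NNReal) : Prop :=
  (∀ l1, l0 < l1 → l1 ≤ F s(x, y) → WSimple G (levelSub G F l1) h) ∧
    ¬ WSimple G (levelSub G F l0) h

/-- `F` is a topological watershed if it has no W-destructible edge. -/
def TopologicalWatershed (G : SimpleGraph V) (F : Sym2 V → NNReal) : Prop :=
  ∀ x y (h : G.Adj x y) (l0 : NNReal), ¬ WDestructible G F h l0

/-- A regional minimum of `F`: a connected component `X` of some cross-section `F[l]`
containing no edge of weight `< l`. -/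
def IsMinimum (G : SimpleGraph V) (F : Sym2 V → NNReal) (X : G.Subgraph) : Prop :=
  ∃ (l : NNReal) (x : V), x ∈ (levelSub G F l).verts ∧ X = compOf G (levelSub G F l) x ∧
    ∀ l1 < l, ∀ e ∈ X.edgeSet, ¬ F e ≤ l1

/-- The graph `M(F)`, union of all the regional minima of `F`. -/
def minimaGraph (G : SimpleGraph V) (F : Sym2 V → NNReal) : G.Subgraph where
  verts := {x | ∃ X, IsMinimum G F X ∧ x ∈ X.verts}
  Adj a b := ∃ X, IsMinimum G F X ∧ X.Adj a b
  adj_sub := by rintro a b ⟨X, _, hab⟩; exact X.adj_sub hab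
  edge_vert := by rintro a b ⟨X, hX, hab⟩; exact ⟨X, hX, X.edge_vert hab⟩
  symm := ⟨by rintro a b ⟨X, hX, hab⟩; exact ⟨X, hX, hab.symm⟩⟩

/-- Connection value between two subgraphs: `F(X,Y) = min {F(x,y) : x ∈ X, y ∈ Y}`. -/
noncomputable def connValSub (G : SimpleGraph V) (F : Sym2 V → NNReal)
    (X Y : G.Subgraph) : NNReal :=
  sInf {l | ∃ x ∈ X.verts, ∃ y ∈ Y.verts, connVal G F x y = l}

/-- An ultrametric watershed: a topological watershed which is null on all its minima. -/
def UltrametricWatershed (G : SimpleGraph V) (F : Sym2 V → NNReal) : Prop :=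
  TopologicalWatershed G F ∧ ∀ X, IsMinimum G F X → ∀ e ∈ X.edgeSet, F e = 0

/-- The regions of a segmentation `S`: its connected components. -/
def Regions (G : SimpleGraph V) (S : G.Subgraph) : Set G.Subgraph :=
  {X | ∃ x ∈ S.verts, X = compOf G S x}

/-- A hierarchical segmentation on `G`: an indexed hierarchy `(H, μ)` on the set of
regions of a segmentation `S` of `G` such that the edge-closing of the union of the
regions of each member of the hierarchy is connected. -/
structure HierSeg {V : Type*} [Fintype V] [DecidableEq V] (G : SimpleGraph V) where
  S : G.Subgraph
  seg : IsSegmentation G S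
  H : Set (Set G.Subgraph)
  hsub : ∀ h ∈ H, h ⊆ Regions G S
  htop : Regions G S ∈ H
  hsing : ∀ X ∈ Regions G S, {X} ∈ H
  hnest : ∀ h ∈ H, ∀ h' ∈ H, (h ∩ h').Nonempty → h ⊆ h' ∨ h' ⊆ h
  mu : Set G.Subgraph → NNReal
  mu_zero : ∀ h ∈ H, (mu h = 0 ↔ ∃ X, h = {X})
  mu_mono : ∀ h ∈ H, ∀ h' ∈ H, h ⊂ h' → mu h < mu h'
  mu_out : ∀ h ∉ H, mu h = 0
  hconn : ∀ h ∈ H, (phi G (sSup h)).Connected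

/-- `H[l]`: the graph induced by the (edge-closed unions of regions of the) members
of the hierarchy at level at most `l`. -/
def HLevel (G : SimpleGraph V) (HS : HierSeg G) (l : NNReal) : G.Subgraph :=
  sSup {K | ∃ h ∈ HS.H, HS.mu h ≤ l ∧ K = phi G (sSup h)}

/-- The saliency map of a hierarchical segmentation. -/
noncomputable def saliencyMap (G : SimpleGraph V) (HS : HierSeg G) : Sym2 V → NNReal :=
  fun e => sInf {l | e ∈ (HLevel G HS l).edgeSet}

/-- The ultrametric opening `Ψ`. -/
noncomputable def psi (G : SimpleGraph V) (F : Sym2 V → NNReal) : Sym2 V → NNReal :=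
  Sym2.lift ⟨fun x y => connVal G F x y, fun x y => by
    have hs : {l | (levelSub G F l).spanningCoe.Reachable x y} =
        {l | (levelSub G F l).spanningCoe.Reachable y x} := by
      ext l
      exact ⟨fun hr => hr.symm, fun hr => hr.symm⟩
    show sInf _ = sInf _
    rw [hs]⟩

/-- Altitude of the lowest component of `F` containing `x`. -/
noncomputable def vertAlt (G : SimpleGraph V) (F : Sym2 V → NNReal) (x : V) : NNReal :=
  sInf {l | x ∈ (levelSub G F l).verts}

/-- `x` and `y` are `l`-separated for `F`. -/
def SeparatedAt (G : SimpleGraph V) (F : Sym2 V → NNReal) (x y : V) (l : NNReal) : Prop :=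
  connVal G F x y = l ∧ max (vertAlt G F x) (vertAlt G F y) < l

/-- `F'` is a separation of `F`. -/
def IsSeparation (G : SimpleGraph V) (F F' : Sym2 V → NNReal) : Prop :=
  ∀ x y l, SeparatedAt G F x y l → SeparatedAt G F' x y l

/-- `C` is a connected component of the cross-section `F[l]`. -/
def IsCompAt (G : SimpleGraph V) (F : Sym2 V → NNReal) (l : NNReal) (C : G.Subgraph) : Prop :=
  ∃ x ∈ (levelSub G F l).verts, C = compOf G (levelSub G F l) x

/-- `h(C)`: the smallest level at which `C` is a component of `F`. -/
noncomputable def hVal (G : SimpleGraph V) (F : Sym2 V → NNReal) (C : G.Subgraph) : NNReal :=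
  sInf {l | IsCompAt G F l C}



omit [Fintype V] [DecidableEq V] in
lemma region_eq {G : SimpleGraph V} {S : G.Subgraph} {X X' : G.Subgraph}
    (hX : X ∈ Regions G S) (hX' : X' ∈ Regions G S) {v : V}
    (h1 : v ∈ X.verts) (h2 : v ∈ X'.verts) : X = X' := by
  obtain ⟨x, hx, rfl⟩ := hX
  obtain ⟨x', hx', rfl⟩ := hX'
  obtain ⟨hv1, hr1⟩ := h1
  obtain ⟨hv2, hr2⟩ := h2
  have hxx' : S.spanningCoe.Reachable x x' := hr1.trans hr2.symm
  ext a b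
  · constructor
    · rintro ⟨ha, hr⟩; exact ⟨ha, hxx'.symm.trans hr⟩
    · rintro ⟨ha, hr⟩; exact ⟨ha, hxx'.trans hr⟩
  · constructor
    · rintro ⟨ha, hr⟩; exact ⟨ha, hxx'.symm.trans hr⟩
    · rintro ⟨ha, hr⟩; exact ⟨ha, hxx'.trans hr⟩

lemma merge_hier {G : SimpleGraph V} (HS : HierSeg G) {h h' : Set G.Subgraph}
    (hh : h ∈ HS.H) (hh' : h' ∈ HS.H) {v : V}
    (hv : v ∈ (sSup h : G.Subgraph).verts) (hv' : v ∈ (sSup h' : G.Subgraph).verts) :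
    h ⊆ h' ∨ h' ⊆ h := by
  rw [Subgraph.verts_sSup, Set.mem_iUnion₂] at hv hv'
  obtain ⟨X, hX, hvX⟩ := hv
  obtain ⟨X', hX', hvX'⟩ := hv'
  have hXX' : X = X' := region_eq (HS.hsub h hh hX) (HS.hsub h' hh' hX') hvX hvX'
  exact HS.hnest h hh h' hh' ⟨X, hX, hXX' ▸ hX'⟩

lemma sub_level (G : SimpleGraph V) (HS : HierSeg G) (l : NNReal) {a b : V}
    (hab : HS.S.Adj a b) : (HLevel G HS l).Adj a b := by
  have haS : a ∈ HS.S.verts := HS.S.edge_vert hab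
  have hbS : b ∈ HS.S.verts := HS.S.edge_vert hab.symm
  have hXreg : compOf G HS.S a ∈ Regions G HS.S := ⟨a, haS, rfl⟩
  have hsing := HS.hsing _ hXreg
  have hmu : HS.mu {compOf G HS.S a} = 0 := (HS.mu_zero _ hsing).mpr ⟨_, rfl⟩
  refine (Subgraph.sSup_adj).mpr ⟨phi G (sSup {compOf G HS.S a}),
    ⟨{compOf G HS.S a}, hsing, by simp [hmu], rfl⟩, ?_⟩
  rw [sSup_singleton]
  exact ⟨HS.S.adj_sub hab, ⟨haS, Reachable.refl a⟩,
    ⟨hbS, SimpleGraph.Adj.reachable (show HS.S.spanningCoe.Adj a b from hab)⟩⟩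

lemma walk_level (G : SimpleGraph V) (HS : HierSeg G) (l : NNReal) {a b : V}
    (p : (edgeInduced G (G.edgeSet \ (G.edgeSet \ (HLevel G HS l).edgeSet))).spanningCoe.Walk a b) :
    a = b ∨ ∃ h ∈ HS.H, HS.mu h ≤ l ∧ a ∈ (sSup h : G.Subgraph).verts ∧
      b ∈ (sSup h : G.Subgraph).verts := by
  induction p with
  | nil => exact Or.inl rfl
  | @cons a c b hadj p ih =>
    right
    have hadj' : G.Adj a c ∧ s(a, c) ∈ G.edgeSet \ (G.edgeSet \ (HLevel G HS l).edgeSet) := hadj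
    have hK : (HLevel G HS l).Adj a c := by
      refine Subgraph.mem_edgeSet.mp ?_
      have := hadj'.2.2
      by_contra hn
      exact this ⟨hadj'.2.1, hn⟩
    obtain ⟨K', ⟨h, hh, hmu, rfl⟩, hK'⟩ := Subgraph.sSup_adj.mp hK
    have hav : a ∈ (sSup h : G.Subgraph).verts := hK'.2.1
    have hcv : c ∈ (sSup h : G.Subgraph).verts := hK'.2.2
    rcases ih with rfl | ⟨h', hh', hmu', hcv', hbv'⟩
    · exact ⟨h, hh, hmu, hav, hcv⟩
    · rcases merge_hier HS hh hh' hcv hcv' with hsub | hsub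
      · exact ⟨h', hh', hmu', Subgraph.verts_mono (sSup_le_sSup hsub) hav, hbv'⟩
      · exact ⟨h, hh, hmu, hav, Subgraph.verts_mono (sSup_le_sSup hsub) hbv'⟩


theorem stmt8 (G : SimpleGraph V) (hG : G.Connected) (HS : HierSeg G) (l : NNReal) :
    IsSegmentation G (HLevel G HS l) := by
  intro x y hxy hC
  obtain ⟨hxE, hKne⟩ := hC
  have hKne' : ¬ (HLevel G HS l).Adj x y := fun h => hKne (Subgraph.mem_edgeSet.mpr h)
  have hSne : s(x, y) ∉ HS.S.edgeSet := fun h => hKne' (sub_level G HS l (Subgraph.mem_edgeSet.mp h))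
  obtain ⟨hx, hy, hnr⟩ := HS.seg x y hxy ⟨hxE, hSne⟩
  have mem_vert : ∀ w : V, w ∈ (edgeInduced G (G.edgeSet \ (G.edgeSet \ HS.S.edgeSet))).verts →
      w ∈ (edgeInduced G (G.edgeSet \ (G.edgeSet \ (HLevel G HS l).edgeSet))).verts := by
    rintro w ⟨z, hz, hze⟩
    have hSwz : HS.S.Adj w z := by
      refine Subgraph.mem_edgeSet.mp ?_
      by_contra hn
      exact hze.2 ⟨hze.1, hn⟩
    have hKwz := sub_level G HS l hSwz
    exact ⟨z, hz, hze.1, fun hd => hd.2 (Subgraph.mem_edgeSet.mpr hKwz)⟩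
  refine ⟨mem_vert x hx, mem_vert y hy, ?_⟩
  intro hr
  obtain ⟨p⟩ := hr
  rcases walk_level G HS l p with rfl | ⟨h, hh, hmu, hxv, hyv⟩
  · exact G.loopless.irrefl x hxy
  · exact hKne' (Subgraph.sSup_adj.mpr ⟨phi G (sSup h), ⟨h, hh, hmu, rfl⟩, hxy, hxv, hyv⟩)
end

section
/- For an edge-weight function F on a finite connected graph, F can be reconstructed from its component tree: for every edge v, F(v) = min{λ : [λ,C] ∈ C*(F), v ∈ E(C)}, where C*(F) consists of the pairs [h(C), C] for C a component of some cross-section F[λ] and h(C) the minimal such λ. -/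
open SimpleGraph

variable {V : Type*} [Fintype V] [DecidableEq V]

theorem stmt15 (G : SimpleGraph V) (hG : G.Connected) (F : Sym2 V → NNReal) :
    ∀ v ∈ G.edgeSet,
      F v = sInf {l | ∃ C : G.Subgraph, IsCompAt G F l C ∧ hVal G F C = l ∧
        v ∈ C.edgeSet} := by
  have key : ∀ (l : NNReal) (C : G.Subgraph), IsCompAt G F l C →
      ∀ v ∈ C.edgeSet, F v ≤ l := by
    rintro l C ⟨x, -, rfl⟩ v hv
    induction v using Sym2.inductionOn with
    | hf a b =>
      rw [SimpleGraph.Subgraph.mem_edgeSet] at hv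
      exact hv.1.2
  rintro v hv
  induction v using Sym2.inductionOn with
  | hf x y =>
    rw [SimpleGraph.mem_edgeSet] at hv
    set l0 := F s(x, y) with hl0
    set C0 := compOf G (levelSub G F l0) x with hC0
    have hcomp : IsCompAt G F l0 C0 := ⟨x, ⟨y, hv, by show F s(x, y) ≤ l0; exact le_refl _⟩, rfl⟩
    have hedge : s(x, y) ∈ C0.edgeSet := by
      rw [SimpleGraph.Subgraph.mem_edgeSet]
      exact ⟨⟨hv, by show F s(x, y) ≤ l0; exact le_refl _⟩, SimpleGraph.Reachable.refl x⟩
    have hval : hVal G F C0 = l0 := by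
      refine le_antisymm (csInf_le (OrderBot.bddBelow _) hcomp) ?_
      refine le_csInf ⟨l0, hcomp⟩ ?_
      intro b hb
      exact key b C0 hb _ hedge
    refine le_antisymm ?_ (csInf_le (OrderBot.bddBelow _) ⟨C0, hcomp, hval, hedge⟩)
    refine le_csInf ⟨l0, C0, hcomp, hval, hedge⟩ ?_
    rintro b ⟨C, hC, -, hvC⟩
    exact key b C hC _ hvC
end
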